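/- Let d ≥ 1, let G_1,…,G_d̄ be a partition of {1,…,d} into nonempty disjoint groups, let α ∈ ℝ^d̄ have strictly positive entries, and let p, q, s, t ∈ [1,∞] satisfy 1/p + 1/q = 1 and 1/s + 1/t = 1. Fix x, β ∈ ℝ^d, y ∈ {−1, 1}, and γ ≥ 0. Then sup_{u ∈ ℝ^d} { log(1 + exp(−y·βᵀu)) − γ‖x − u‖_{α⁻¹-(q,t)} } equals log(1 + exp(−y·βᵀx)) if ‖β‖_{α-(p,s)} ≤ γ, and equals +∞ if ‖β‖_{α-(p,s)} > γ. -/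

import Mathlib

open scoped ENNReal BigOperators
open MeasureTheory Filter

/-- The l_p norm (p ∈ [1,∞], with sup modification at p = ∞) of a finite real vector. -/
noncomputable def lpn (p : ℝ≥0∞) {ι : Type} [Fintype ι] (x : ι → ℝ) : ℝ :=
  ‖(WithLp.equiv p (ι → ℝ)).symm x‖

/-- The α-(p,s) groupwise norm: ‖x‖ = ( Σ_i α_i^s ‖x(G_i)‖_p^s )^{1/s}. -/
noncomputable def gnorm {d dbar : ℕ} (G : Fin dbar → Finset (Fin d)) (α : Fin dbar → ℝ)
    (p s : ℝ≥0∞) (x : Fin d → ℝ) : ℝ :=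
  lpn s (fun i => α i * lpn p (fun j : {k // k ∈ G i} => x j.1))

/-- G_1, …, G_d̄ form a partition of {1,…,d} into nonempty disjoint groups. -/
def IsPartition {d dbar : ℕ} (G : Fin dbar → Finset (Fin d)) : Prop :=
  (∀ i, (G i).Nonempty) ∧ (∀ i j, i ≠ j → Disjoint (G i) (G j)) ∧ (∀ k, ∃ i, k ∈ G i)


section Aux
variable {ι : Type} [Fintype ι] {p q : ℝ≥0∞}

lemma lpn_eq_ciSup (x : ι → ℝ) : lpn ∞ x = ⨆ i, |x i| := by
  simp [lpn, PiLp.norm_eq_ciSup, Real.norm_eq_abs]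

lemma lpn_eq_sum (hp : 0 < p.toReal) (x : ι → ℝ) :
    lpn p x = (∑ i, |x i| ^ p.toReal) ^ (1 / p.toReal) := by
  simp [lpn, PiLp.norm_eq_sum hp, Real.norm_eq_abs]

lemma toReal_pos_of_one_le (hp : 1 ≤ p) (hp' : p ≠ ∞) : 0 < p.toReal := by
  have := ENNReal.toReal_mono hp' hp
  simpa using lt_of_lt_of_le one_pos (by simpa using this)

lemma lpn_one_eq (x : ι → ℝ) : lpn 1 x = ∑ i, |x i| := by
  rw [lpn_eq_sum (by simp)]; simp

lemma lpn_nonneg (hp : 1 ≤ p) (x : ι → ℝ) : 0 ≤ lpn p x := by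
  haveI : Fact (1 ≤ p) := ⟨hp⟩
  exact norm_nonneg _

lemma lpn_zero (hp : 1 ≤ p) : lpn p (fun _ : ι => (0:ℝ)) = 0 := by
  haveI : Fact (1 ≤ p) := ⟨hp⟩
  have : (fun _ : ι => (0:ℝ)) = (0 : ι → ℝ) := rfl
  rw [lpn, this]; simp

lemma lpn_smul (hp : 1 ≤ p) (c : ℝ) (x : ι → ℝ) :
    lpn p (c • x) = |c| * lpn p x := by
  haveI : Fact (1 ≤ p) := ⟨hp⟩
  rw [lpn, lpn, WithLp.equiv_symm_apply, WithLp.toLp_smul, norm_smul, Real.norm_eq_abs]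

lemma lpn_abs (hp : 1 ≤ p) (x : ι → ℝ) : lpn p (fun i => |x i|) = lpn p x := by
  rcases eq_or_ne p ∞ with rfl | hp'
  · simp [lpn_eq_ciSup]
  · rw [lpn_eq_sum (toReal_pos_of_one_le hp hp'), lpn_eq_sum (toReal_pos_of_one_le hp hp')]
    simp [abs_abs]

lemma lpn_mono (hp : 1 ≤ p) {x z : ι → ℝ} (h : ∀ i, |x i| ≤ z i) :
    lpn p x ≤ lpn p z := by
  rcases eq_or_ne p ∞ with rfl | hp'
  · rw [lpn_eq_ciSup, lpn_eq_ciSup]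
    exact ciSup_mono (Set.Finite.bddAbove (Set.finite_range _))
      (fun i => (h i).trans (le_abs_self _))
  · have h0 := toReal_pos_of_one_le hp hp'
    rw [lpn_eq_sum h0, lpn_eq_sum h0]
    refine Real.rpow_le_rpow (by positivity) (Finset.sum_le_sum fun i _ => ?_) (by positivity)
    exact Real.rpow_le_rpow (abs_nonneg _) ((h i).trans (le_abs_self _)) h0.le

lemma conj_cases (hp : 1 ≤ p) (hq : 1 ≤ q) (hpq : 1 / p + 1 / q = 1) :
    (p = 1 ∧ q = ∞) ∨ (p = ∞ ∧ q = 1) ∨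
      (p ≠ ∞ ∧ q ≠ ∞ ∧ Real.HolderConjugate p.toReal q.toReal) := by
  simp only [one_div] at hpq
  rcases eq_or_ne p 1 with rfl | hp1
  · left
    refine ⟨rfl, ?_⟩
    have : q⁻¹ = 0 := by
      have h1 : (1:ℝ≥0∞)⁻¹ + q⁻¹ = 1⁻¹ + 0 := by simpa using hpq
      exact (ENNReal.add_right_inj (by simp)).1 h1
    simpa [ENNReal.inv_eq_zero] using this
  rcases eq_or_ne p ∞ with rfl | hp'
  · right; left
    refine ⟨rfl, ?_⟩
    have : q⁻¹ = 1 := by simpa using hpq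
    simpa [ENNReal.inv_eq_one] using this
  · right; right
    have hplt : 1 < p := lt_of_le_of_ne hp (Ne.symm hp1)
    have hq1 : q ≠ 1 := by
      rintro rfl
      simp only [inv_one] at hpq
      have : p⁻¹ = 0 := by
        have h1 : p⁻¹ + 1 = 0 + 1 := by simpa [add_comm] using hpq
        exact (ENNReal.add_left_inj (by simp)).1 h1
      exact hp' (by simpa [ENNReal.inv_eq_zero] using this)
    have hq' : q ≠ ∞ := by
      rintro rfl
      simp only [ENNReal.inv_top, add_zero] at hpq
      exact hp1 (by simpa [ENNReal.inv_eq_one] using hpq)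
    refine ⟨hp', hq', Real.holderConjugate_iff.2 ⟨?_, ?_⟩⟩
    · simpa using (ENNReal.toReal_lt_toReal ENNReal.one_ne_top hp').2 hplt
    · have hp0 : p⁻¹ ≠ ∞ := by simp [ENNReal.inv_ne_top]; positivity
      have hq0 : q⁻¹ ≠ ∞ := by simp [ENNReal.inv_ne_top]; positivity
      have := congrArg ENNReal.toReal hpq
      rwa [ENNReal.toReal_add hp0 hq0, ENNReal.toReal_inv, ENNReal.toReal_inv,
        ENNReal.toReal_one] at this

lemma lpn_holder (hp : 1 ≤ p) (hq : 1 ≤ q) (hpq : 1 / p + 1 / q = 1)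
    (f g : ι → ℝ) : ∑ i, f i * g i ≤ lpn p f * lpn q g := by
  have step1 : ∑ i, f i * g i ≤ ∑ i, |f i| * |g i| :=
    Finset.sum_le_sum fun i _ => by rw [← abs_mul]; exact le_abs_self _
  rcases conj_cases hp hq hpq with ⟨rfl, rfl⟩ | ⟨rfl, rfl⟩ | ⟨hp', hq', hconj⟩
  · refine step1.trans ?_
    rw [lpn_one_eq, lpn_eq_ciSup]
    calc ∑ i, |f i| * |g i| ≤ ∑ i, |f i| * (⨆ j, |g j|) :=
          Finset.sum_le_sum fun i _ => mul_le_mul_of_nonneg_left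
            (le_ciSup (Set.Finite.bddAbove (Set.finite_range fun j => |g j|)) i) (abs_nonneg _)
      _ = (∑ i, |f i|) * ⨆ j, |g j| := by rw [← Finset.sum_mul]
  · refine step1.trans ?_
    rw [lpn_one_eq, lpn_eq_ciSup]
    calc ∑ i, |f i| * |g i| ≤ ∑ i, (⨆ j, |f j|) * |g i| :=
          Finset.sum_le_sum fun i _ => mul_le_mul_of_nonneg_right
            (le_ciSup (Set.Finite.bddAbove (Set.finite_range fun j => |f j|)) i) (abs_nonneg _)
      _ = (⨆ j, |f j|) * ∑ i, |g i| := by rw [← Finset.mul_sum, mul_comm]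
  · rw [lpn_eq_sum (toReal_pos_of_one_le hp hp'), lpn_eq_sum (toReal_pos_of_one_le hq hq')]
    exact Real.inner_le_Lp_mul_Lq Finset.univ f g hconj

lemma lpn_exists_dual_nonneg (hp : 1 ≤ p) (hq : 1 ≤ q) (hpq : 1 / p + 1 / q = 1)
    (b : ι → ℝ) (hb : ∀ i, 0 ≤ b i) :
    ∃ u : ι → ℝ, (∀ i, 0 ≤ u i) ∧ lpn q u ≤ 1 ∧ ∑ i, b i * u i = lpn p b := by
  rcases conj_cases hp hq hpq with ⟨rfl, rfl⟩ | ⟨rfl, rfl⟩ | ⟨hp', hq', hconj⟩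
  · refine ⟨fun _ => 1, fun _ => zero_le_one, ?_, ?_⟩
    · rw [lpn_eq_ciSup]
      exact Real.iSup_le (fun i => by norm_num) zero_le_one
    · rw [lpn_one_eq]
      simp only [mul_one]
      exact Finset.sum_congr rfl fun i _ => (abs_of_nonneg (hb i)).symm
  · rcases isEmpty_or_nonempty ι with hι | hι
    · refine ⟨fun _ => 0, fun _ => le_rfl, ?_, ?_⟩
      · rw [lpn_one_eq]; simp
      · rw [lpn_eq_ciSup]
        simp [Real.iSup_of_isEmpty]
    · haveI := Classical.decEq ι
      obtain ⟨i₀, -, hmax⟩ := Finset.exists_max_image Finset.univ b ⟨Classical.arbitrary ι,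
        Finset.mem_univ _⟩
      refine ⟨fun i => if i = i₀ then 1 else 0,
        fun i => by dsimp only; split <;> norm_num, ?_, ?_⟩
      · rw [lpn_one_eq]
        have : ∀ i, |if i = i₀ then (1:ℝ) else 0| = if i = i₀ then (1:ℝ) else 0 := fun i => by
          split <;> norm_num
        simp only [this, Finset.sum_ite_eq' Finset.univ i₀ fun _ => (1:ℝ)]
        simp
      · rw [lpn_eq_ciSup]
        have h1 : ∑ i, b i * (if i = i₀ then (1:ℝ) else 0) = b i₀ := by
          simp [mul_ite, Finset.sum_ite_eq' Finset.univ i₀ b]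
        have h2 : (⨆ i, |b i|) = b i₀ :=
          le_antisymm (ciSup_le fun i => (abs_of_nonneg (hb i)).le.trans
              (hmax i (Finset.mem_univ i)))
            (le_ciSup_of_le (Set.Finite.bddAbove (Set.finite_range _)) i₀ (le_abs_self _))
        rw [h1, h2]
  · set pr := p.toReal with hpr
    set qr := q.toReal with hqr
    have hpr0 : 0 < pr := toReal_pos_of_one_le hp hp'
    have hqr0 : 0 < qr := toReal_pos_of_one_le hq hq'
    by_cases hb0 : ∀ i, b i = 0
    · refine ⟨fun _ => 0, fun _ => le_rfl, ?_, ?_⟩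
      · rw [lpn_zero hq]; norm_num
      · have : b = fun _ => 0 := funext hb0
        rw [this, lpn_zero hp]
        simp
    · push_neg at hb0
      obtain ⟨j, hj⟩ := hb0
      set N := lpn p b with hN
      have habs : ∀ i, |b i| = b i := fun i => abs_of_nonneg (hb i)
      have hsum : N = (∑ i, b i ^ pr) ^ (1 / pr) := by
        rw [hN, lpn_eq_sum hpr0]
        simp only [habs, hpr]
      have hsum_pos : 0 < ∑ i, b i ^ pr := by
        have : 0 < b j ^ pr := Real.rpow_pos_of_pos (lt_of_le_of_ne (hb j) (Ne.symm hj)) _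
        exact lt_of_lt_of_le this (Finset.single_le_sum
          (fun i _ => Real.rpow_nonneg (hb i) _) (Finset.mem_univ j))
      have hNpos : 0 < N := by rw [hsum]; positivity
      have hNp : N ^ pr = ∑ i, b i ^ pr := by
        rw [hsum, ← Real.rpow_mul (by positivity), one_div, inv_mul_cancel₀ hpr0.ne',
          Real.rpow_one]
      have hbnn : ∀ i, (0:ℝ) ≤ b i ^ (pr - 1) := fun i => Real.rpow_nonneg (hb i) _
      have hNnn : (0:ℝ) ≤ N ^ (pr - 1) := Real.rpow_nonneg hNpos.le _
      have hNppos : (0:ℝ) < N ^ (pr - 1) := Real.rpow_pos_of_pos hNpos _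
      refine ⟨fun i => b i ^ (pr - 1) / N ^ (pr - 1),
        fun i => div_nonneg (hbnn i) hNnn, ?_, ?_⟩
      · rw [lpn_eq_sum hqr0, ← hqr]
        have hexp : (pr - 1) * qr = pr := hconj.sub_one_mul_conj
        have hterm : ∀ i, |b i ^ (pr - 1) / N ^ (pr - 1)| ^ qr = b i ^ pr / N ^ pr := by
          intro i
          rw [abs_of_nonneg (div_nonneg (hbnn i) hNnn),
            Real.div_rpow (hbnn i) hNnn, ← Real.rpow_mul (hb i), ← Real.rpow_mul hNpos.le,
            hexp]
        simp only [hterm]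
        rw [← Finset.sum_div, ← hNp, div_self (by positivity)]
        rw [Real.one_rpow]
      · have hbmul : ∀ i, b i * (b i ^ (pr - 1) / N ^ (pr - 1))
            = b i ^ pr / N ^ (pr - 1) := by
          intro i
          rw [← mul_div_assoc]
          congr 1
          rw [← Real.rpow_one_add' (hb i) (by rw [add_sub_cancel]; exact hpr0.ne'),
            add_sub_cancel]
        simp only [hbmul]
        rw [← Finset.sum_div, ← hNp, ← Real.rpow_sub hNpos, sub_sub_cancel, Real.rpow_one]

lemma lpn_exists_dual (hp : 1 ≤ p) (hq : 1 ≤ q) (hpq : 1 / p + 1 / q = 1) (b : ι → ℝ) :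
    ∃ u : ι → ℝ, lpn q u ≤ 1 ∧ ∑ i, b i * u i = lpn p b := by
  obtain ⟨v, hv0, hv1, hv2⟩ := lpn_exists_dual_nonneg hp hq hpq (fun i => |b i|)
    (fun i => abs_nonneg _)
  refine ⟨fun i => (if b i < 0 then -1 else 1) * v i, ?_, ?_⟩
  · have habs : (fun i => |(if b i < 0 then (-1:ℝ) else 1) * v i|) = fun i => v i := by
      funext i
      rw [abs_mul]
      split <;> simp [abs_of_nonneg (hv0 i)]
    calc lpn q (fun i => (if b i < 0 then (-1:ℝ) else 1) * v i)
        = lpn q (fun i => |(if b i < 0 then (-1:ℝ) else 1) * v i|) :=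
          (lpn_abs hq _).symm
      _ = lpn q v := by rw [habs]
      _ ≤ 1 := hv1
  · have : ∀ i, b i * ((if b i < 0 then (-1:ℝ) else 1) * v i) = |b i| * v i := by
      intro i
      rcases lt_or_ge (b i) 0 with h | h
      · rw [if_pos h, abs_of_neg h]; ring
      · rw [if_neg (not_lt.2 h), abs_of_nonneg h]; ring
    simp only [this]
    rw [hv2, lpn_abs hp]

lemma log_one_add_exp_le (a c : ℝ) :
    Real.log (1 + Real.exp a) ≤ Real.log (1 + Real.exp c) + |a - c| := by
  have h1 : (0:ℝ) < 1 + Real.exp c := by positivity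
  have h2 : 1 + Real.exp a ≤ Real.exp |a - c| * (1 + Real.exp c) := by
    rw [mul_add, mul_one, ← Real.exp_add]
    have e1 : (1:ℝ) ≤ Real.exp |a - c| := by
      rw [← Real.exp_zero]
      exact Real.exp_le_exp.2 (abs_nonneg _)
    have e2 : Real.exp a ≤ Real.exp (|a - c| + c) :=
      Real.exp_le_exp.2 (by
        have := le_abs_self (a - c); linarith)
    linarith
  calc Real.log (1 + Real.exp a) ≤ Real.log (Real.exp |a - c| * (1 + Real.exp c)) :=
        Real.log_le_log (by positivity) h2
    _ = |a - c| + Real.log (1 + Real.exp c) := by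
        rw [Real.log_mul (by positivity) h1.ne', Real.log_exp]
    _ = Real.log (1 + Real.exp c) + |a - c| := by ring

lemma le_log_one_add_exp (z : ℝ) : z ≤ Real.log (1 + Real.exp z) := by
  calc z = Real.log (Real.exp z) := (Real.log_exp z).symm
    _ ≤ Real.log (1 + Real.exp z) :=
        Real.log_le_log (Real.exp_pos z) (by linarith [Real.exp_pos z])

end Aux

section GAux
variable {d dbar : ℕ} {p q s t : ℝ≥0∞}

lemma gnorm_nonneg (G : Fin dbar → Finset (Fin d)) (α : Fin dbar → ℝ) (hs : 1 ≤ s)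
    (x : Fin d → ℝ) : 0 ≤ gnorm G α p s x := lpn_nonneg hs _

lemma gnorm_zero (G : Fin dbar → Finset (Fin d)) (α : Fin dbar → ℝ)
    (hq : 1 ≤ q) (ht : 1 ≤ t) : gnorm G α q t (0 : Fin d → ℝ) = 0 := by
  unfold gnorm
  have h1 : ∀ i, (fun j : {k // k ∈ G i} => (0 : Fin d → ℝ) j.1) = fun _ => (0:ℝ) := by
    intro i; funext j; rfl
  have h2 : (fun i => α i * lpn q (fun j : {k // k ∈ G i} => (0 : Fin d → ℝ) j.1))
      = fun _ : Fin dbar => (0:ℝ) := by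
    funext i
    rw [h1 i, lpn_zero hq, mul_zero]
  rw [h2, lpn_zero ht]

lemma gnorm_smul (G : Fin dbar → Finset (Fin d)) (α : Fin dbar → ℝ) (hα : ∀ i, 0 < α i)
    (hq : 1 ≤ q) (ht : 1 ≤ t) (c : ℝ) (x : Fin d → ℝ) :
    gnorm G α q t (c • x) = |c| * gnorm G α q t x := by
  unfold gnorm
  have h1 : ∀ i, (fun j : {k // k ∈ G i} => (c • x) j.1)
      = c • (fun j : {k // k ∈ G i} => x j.1) := by
    intro i; funext j; rfl
  have h2 : (fun i => α i * lpn q (fun j : {k // k ∈ G i} => (c • x) j.1))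
      = |c| • (fun i => α i * lpn q (fun j : {k // k ∈ G i} => x j.1)) := by
    funext i
    rw [h1 i, lpn_smul hq]
    simp [Pi.smul_apply, smul_eq_mul]
    ring
  rw [h2, lpn_smul ht]
  rw [abs_abs]

lemma gnorm_holder (G : Fin dbar → Finset (Fin d)) (hG : IsPartition G)
    (α : Fin dbar → ℝ) (hα : ∀ i, 0 < α i)
    (hp : 1 ≤ p) (hq : 1 ≤ q) (hs : 1 ≤ s) (ht : 1 ≤ t)
    (hpq : 1 / p + 1 / q = 1) (hst : 1 / s + 1 / t = 1) (β v : Fin d → ℝ) :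
    ∑ k, β k * v k ≤ gnorm G α p s β * gnorm G (fun i => (α i)⁻¹) q t v := by
  classical
  obtain ⟨-, hdisj, hcover⟩ := hG
  have huniv : (Finset.univ : Finset (Fin d)) = Finset.univ.biUnion G := by
    ext k
    simpa using hcover k
  have hPD : (↑(Finset.univ : Finset (Fin dbar)) : Set (Fin dbar)).PairwiseDisjoint G := by
    intro i _ j _ hij
    exact hdisj i j hij
  have hsplit : ∑ k, β k * v k = ∑ i, ∑ k ∈ G i, β k * v k := by
    rw [huniv, Finset.sum_biUnion hPD]
  rw [hsplit]
  have hgrp : ∀ i, ∑ k ∈ G i, β k * v k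
      ≤ (α i * lpn p (fun j : {k // k ∈ G i} => β j.1))
        * ((α i)⁻¹ * lpn q (fun j : {k // k ∈ G i} => v j.1)) := by
    intro i
    have h1 : ∑ k ∈ G i, β k * v k
        = ∑ j : {k // k ∈ G i}, β j.1 * v j.1 := by
      rw [← Finset.sum_coe_sort (G i) (fun k => β k * v k)]
    rw [h1]
    have h2 := lpn_holder hp hq hpq (fun j : {k // k ∈ G i} => β j.1)
      (fun j : {k // k ∈ G i} => v j.1)
    have h3 : (α i * lpn p fun j : {k // k ∈ G i} => β j.1)
        * ((α i)⁻¹ * lpn q fun j : {k // k ∈ G i} => v j.1)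
        = (lpn p fun j : {k // k ∈ G i} => β j.1)
          * lpn q fun j : {k // k ∈ G i} => v j.1 := by
      rw [mul_mul_mul_comm, mul_inv_cancel₀ (hα i).ne', one_mul]
    rw [h3]
    exact h2
  refine (Finset.sum_le_sum fun i _ => hgrp i).trans ?_
  exact lpn_holder hs ht hst _ _
end GAux

theorem statement11 {d dbar : ℕ} (hd : 1 ≤ d)
    (G : Fin dbar → Finset (Fin d)) (hG : IsPartition G)
    (α : Fin dbar → ℝ) (hα : ∀ i, 0 < α i)
    (p q s t : ℝ≥0∞) (hp : 1 ≤ p) (hq : 1 ≤ q) (hs : 1 ≤ s) (ht : 1 ≤ t)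
    (hpq : 1 / p + 1 / q = 1) (hst : 1 / s + 1 / t = 1)
    (x β : Fin d → ℝ) (y : ℝ) (hy : y = 1 ∨ y = -1) (γ : ℝ) (hγ : 0 ≤ γ) :
    (gnorm G α p s β ≤ γ →
      (⨆ u : Fin d → ℝ, ENNReal.ofReal
          (Real.log (1 + Real.exp (- y * ∑ k, β k * u k)) -
            γ * gnorm G (fun i => (α i)⁻¹) q t (x - u)))
        = ENNReal.ofReal (Real.log (1 + Real.exp (- y * ∑ k, β k * x k)))) ∧
    (γ < gnorm G α p s β →
      (⨆ u : Fin d → ℝ, ENNReal.ofReal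
          (Real.log (1 + Real.exp (- y * ∑ k, β k * u k)) -
            γ * gnorm G (fun i => (α i)⁻¹) q t (x - u)))
        = ⊤) := by
  classical
  have hy2 : y * y = 1 := by rcases hy with rfl | rfl <;> norm_num
  have hyabs : |y| = 1 := by rcases hy with rfl | rfl <;> norm_num
  have hα' : ∀ i, 0 < (α i)⁻¹ := fun i => inv_pos.2 (hα i)
  constructor
  · -- sup attained at x
    intro h1
    apply le_antisymm
    · refine iSup_le fun u => ?_
      apply ENNReal.ofReal_le_ofReal
      have hnn : 0 ≤ gnorm G (fun i => (α i)⁻¹) q t (x - u) := gnorm_nonneg _ _ ht _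
      have hH1 := gnorm_holder G hG α hα hp hq hs ht hpq hst β (x - u)
      have hH2 := gnorm_holder G hG α hα hp hq hs ht hpq hst β (u - x)
      have hux : u - x = (-1 : ℝ) • (x - u) := by
        funext k; simp
      have hgux : gnorm G (fun i => (α i)⁻¹) q t (u - x)
          = gnorm G (fun i => (α i)⁻¹) q t (x - u) := by
        rw [hux, gnorm_smul G _ hα' hq ht]; simp
      rw [hgux] at hH2
      have hsub : ∑ k, β k * (u - x) k = - ∑ k, β k * (x - u) k := by
        rw [← Finset.sum_neg_distrib]
        exact Finset.sum_congr rfl fun k _ => by simp [Pi.sub_apply]; ring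
      rw [hsub] at hH2
      have habs : |∑ k, β k * (x - u) k|
          ≤ gnorm G α p s β * gnorm G (fun i => (α i)⁻¹) q t (x - u) := by
        rw [abs_le]
        constructor
        · linarith
        · exact hH1
      have hbound : |∑ k, β k * (x - u) k| ≤ γ * gnorm G (fun i => (α i)⁻¹) q t (x - u) :=
        habs.trans (mul_le_mul_of_nonneg_right h1 hnn)
      have hlog := log_one_add_exp_le (- y * ∑ k, β k * u k) (- y * ∑ k, β k * x k)
      have hdiff : |(- y * ∑ k, β k * u k) - (- y * ∑ k, β k * x k)|
          = |∑ k, β k * (x - u) k| := by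
        have e : ∑ k, β k * (x - u) k = ∑ k, β k * x k - ∑ k, β k * u k := by
          rw [← Finset.sum_sub_distrib]
          exact Finset.sum_congr rfl fun k _ => by simp [Pi.sub_apply]; ring
        have e2 : (- y * ∑ k, β k * u k) - (- y * ∑ k, β k * x k)
            = y * ∑ k, β k * (x - u) k := by rw [e]; ring
        rw [e2, abs_mul, hyabs, one_mul]
      rw [hdiff] at hlog
      linarith
    · have hle := le_iSup (fun u : Fin d → ℝ => ENNReal.ofReal
          (Real.log (1 + Real.exp (- y * ∑ k, β k * u k)) -
            γ * gnorm G (fun i => (α i)⁻¹) q t (x - u))) x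
      have hzero : gnorm G (fun i => (α i)⁻¹) q t (0 : Fin d → ℝ) = 0 :=
        gnorm_zero G _ hq ht
      simpa [sub_self, hzero] using hle
  · -- sup is ⊤
    intro h2
    obtain ⟨-, hdisj, -⟩ := hG
    set a : Fin dbar → ℝ := fun i => α i * lpn p (fun j : {k // k ∈ G i} => β j.1) with ha
    have ha0 : ∀ i, 0 ≤ a i := fun i => mul_nonneg (hα i).le (lpn_nonneg hp _)
    have hga : gnorm G α p s β = lpn s a := rfl
    obtain ⟨c, hc0, hc1, hc2⟩ := lpn_exists_dual_nonneg hs ht hst a ha0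
    have H : ∀ i, ∃ u : {k // k ∈ G i} → ℝ, lpn q u ≤ 1 ∧
        ∑ j, β j.1 * u j = lpn p (fun j : {k // k ∈ G i} => β j.1) :=
      fun i => lpn_exists_dual hp hq hpq _
    choose u hu1 hu2 using H
    have hu1' : ∀ i, 0 ≤ lpn q (u i) := fun i => lpn_nonneg hq _
    set w : Fin d → ℝ :=
      fun k => ∑ i, α i * c i * (if h : k ∈ G i then u i ⟨k, h⟩ else 0) with hw
    -- inner sums
    have hinner : ∀ i, ∑ k : Fin d, (if h : k ∈ G i then β k * u i ⟨k, h⟩ else 0)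
        = ∑ j : {k // k ∈ G i}, β j.1 * u i j := by
      intro i
      rw [(Finset.sum_subset (Finset.subset_univ (G i))
        (fun k _ hk => dif_neg hk)).symm]
      rw [← Finset.sum_attach (G i)
        (fun k => if h : k ∈ G i then β k * u i ⟨k, h⟩ else 0)]
      rw [Finset.univ_eq_attach]
      exact Finset.sum_congr rfl fun j _ => by rw [dif_pos j.2]
    -- claim 1
    have hclaim1 : ∑ k, β k * w k = lpn s a := by
      have e1 : ∑ k, β k * w k
          = ∑ i, α i * c i * ∑ k : Fin d, (if h : k ∈ G i then β k * u i ⟨k, h⟩ else 0) := by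
        rw [hw]
        simp only [Finset.mul_sum]
        rw [Finset.sum_comm]
        refine Finset.sum_congr rfl fun i _ => Finset.sum_congr rfl fun k _ => ?_
        by_cases hk : k ∈ G i
        · rw [dif_pos hk, dif_pos hk]; ring
        · rw [dif_neg hk, dif_neg hk, mul_zero, mul_zero]
      rw [e1]
      have e2 : ∀ i, α i * c i * ∑ k : Fin d,
          (if h : k ∈ G i then β k * u i ⟨k, h⟩ else 0) = a i * c i := by
        intro i
        rw [hinner i, hu2 i, ha]
        ring
      rw [Finset.sum_congr rfl fun i _ => e2 i, ← hc2]
    -- claim 2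
    have hwres : ∀ i (j : {k // k ∈ G i}), w j.1 = α i * c i * u i j := by
      intro i j
      simp only [hw]
      rw [Finset.sum_eq_single i]
      · rw [dif_pos j.2]
      · intro i' _ hii'
        rw [dif_neg (fun hmem => Finset.disjoint_left.1 (hdisj i' i hii') hmem j.2), mul_zero]
      · intro h; exact absurd (Finset.mem_univ i) h
    have hres : ∀ i, lpn q (fun j : {k // k ∈ G i} => w j.1)
        = α i * c i * lpn q (u i) := by
      intro i
      have : (fun j : {k // k ∈ G i} => w j.1) = (α i * c i) • u i := by
        funext j
        rw [hwres i j]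
        rfl
      rw [this, lpn_smul hq, abs_of_nonneg (mul_nonneg (hα i).le (hc0 i))]
    have hclaim2 : gnorm G (fun i => (α i)⁻¹) q t w ≤ 1 := by
      refine le_trans ?_ hc1
      unfold gnorm
      refine lpn_mono ht fun i => ?_
      rw [hres i]
      have e3 : (α i)⁻¹ * (α i * c i * lpn q (u i)) = c i * lpn q (u i) := by
        rw [show (α i)⁻¹ * (α i * c i * lpn q (u i))
            = ((α i)⁻¹ * α i) * (c i * lpn q (u i)) by ring,
          inv_mul_cancel₀ (hα i).ne', one_mul]
      rw [e3, abs_of_nonneg (mul_nonneg (hc0 i) (hu1' i))]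
      calc c i * lpn q (u i) ≤ c i * 1 := mul_le_mul_of_nonneg_left (hu1 i) (hc0 i)
        _ = c i := mul_one _
    have hβw : γ < ∑ k, β k * w k := by rw [hclaim1, ← hga]; exact h2
    have hδ : 0 < ∑ k, β k * w k - γ := by linarith
    -- conclude
    apply ENNReal.eq_top_of_forall_nnreal_le
    intro r
    set C : ℝ := - y * ∑ k, β k * x k with hC
    obtain ⟨n, hn⟩ := exists_nat_ge (((r:ℝ) - C) / (∑ k, β k * w k - γ))
    set u0 : Fin d → ℝ := fun k => x k - ((n : ℝ) * y) * w k with hu0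
    have hxu0 : x - u0 = ((n : ℝ) * y) • w := by
      funext k
      simp [hu0]
    have hgn : gnorm G (fun i => (α i)⁻¹) q t (x - u0)
        = (n : ℝ) * gnorm G (fun i => (α i)⁻¹) q t w := by
      rw [hxu0, gnorm_smul G _ hα' hq ht, abs_mul, hyabs, mul_one, Nat.abs_cast]
    have hsum0 : - y * ∑ k, β k * u0 k = C + (n : ℝ) * ∑ k, β k * w k := by
      have e4 : ∑ k, β k * u0 k
          = ∑ k, β k * x k - (n : ℝ) * y * ∑ k, β k * w k := by
        rw [Finset.mul_sum, ← Finset.sum_sub_distrib]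
        exact Finset.sum_congr rfl fun k _ => by rw [hu0]; ring
      rw [e4, hC]
      have : -y * ((n:ℝ) * y * ∑ k, β k * w k) = (n:ℝ) * (y*y) * -(∑ k, β k * w k) := by ring
      rw [mul_sub, this, hy2]
      ring
    have hNw0 : 0 ≤ gnorm G (fun i => (α i)⁻¹) q t w := gnorm_nonneg _ _ ht _
    have key : (r : ℝ) ≤ Real.log (1 + Real.exp (- y * ∑ k, β k * u0 k)) -
        γ * gnorm G (fun i => (α i)⁻¹) q t (x - u0) := by
      have k1 := le_log_one_add_exp (- y * ∑ k, β k * u0 k)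
      rw [hsum0] at k1 ⊢
      rw [hgn]
      have k2 : γ * ((n:ℝ) * gnorm G (fun i => (α i)⁻¹) q t w) ≤ (n:ℝ) * γ := by
        calc γ * ((n:ℝ) * gnorm G (fun i => (α i)⁻¹) q t w)
            = (n:ℝ) * (γ * gnorm G (fun i => (α i)⁻¹) q t w) := by ring
          _ ≤ (n:ℝ) * (γ * 1) := by
              exact mul_le_mul_of_nonneg_left
                (mul_le_mul_of_nonneg_left hclaim2 hγ) (Nat.cast_nonneg n)
          _ = (n:ℝ) * γ := by ring
      have k3 : ((r:ℝ) - C) ≤ (n:ℝ) * (∑ k, β k * w k - γ) := by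
        calc ((r:ℝ) - C) = (((r:ℝ) - C) / (∑ k, β k * w k - γ)) * (∑ k, β k * w k - γ) := by
              rw [div_mul_cancel₀ _ hδ.ne']
          _ ≤ (n:ℝ) * (∑ k, β k * w k - γ) := mul_le_mul_of_nonneg_right hn hδ.le
      nlinarith [k1, k2, k3]
    calc (r : ℝ≥0∞) = ENNReal.ofReal (r : ℝ) := ENNReal.ofReal_coe_nnreal.symm
      _ ≤ ENNReal.ofReal (Real.log (1 + Real.exp (- y * ∑ k, β k * u0 k)) -
            γ * gnorm G (fun i => (α i)⁻¹) q t (x - u0)) := ENNReal.ofReal_le_ofReal key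
      _ ≤ ⨆ u : Fin d → ℝ, ENNReal.ofReal
            (Real.log (1 + Real.exp (- y * ∑ k, β k * u k)) -
              γ * gnorm G (fun i => (α i)⁻¹) q t (x - u)) :=
          le_iSup (fun u : Fin d → ℝ => ENNReal.ofReal
            (Real.log (1 + Real.exp (- y * ∑ k, β k * u k)) -
              γ * gnorm G (fun i => (α i)⁻¹) q t (x - u))) u0
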